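/- The product of two palindromic and unimodal polynomials with nonnegative real coefficients is again palindromic and unimodal. -/
import Mathlib


open Finset

/-- A permutation of `Fin n` viewed as a function `ℕ → ℕ` (0-based), identity outside. -/
def pf {n : ℕ} (π : Equiv.Perm (Fin n)) (i : ℕ) : ℕ :=
  if h : i < n then (π ⟨i, h⟩ : ℕ) else i

/-- Number of descents. -/
def desN {n : ℕ} (π : Equiv.Perm (Fin n)) : ℕ :=
  ((range (n - 1)).filter (fun i => pf π (i + 1) < pf π i)).card

/-- Number of inversions. -/
def invN {n : ℕ} (π : Equiv.Perm (Fin n)) : ℕ :=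
  (((range n) ×ˢ (range n)).filter (fun p => p.1 < p.2 ∧ pf π p.2 < pf π p.1)).card

/-- Number of excedances. -/
def excN {n : ℕ} (π : Equiv.Perm (Fin n)) : ℕ :=
  ((range n).filter (fun i => i < pf π i)).card

/-- Major index. -/
def majN {n : ℕ} (π : Equiv.Perm (Fin n)) : ℕ :=
  ∑ i ∈ (range (n - 1)).filter (fun i => pf π (i + 1) < pf π i), (i + 1)

/-- Number of admissible inversions. -/
def aiN {n : ℕ} (π : Equiv.Perm (Fin n)) : ℕ :=
  (((range n) ×ˢ (range n)).filter (fun p => p.1 < p.2 ∧ pf π p.2 < pf π p.1 ∧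
    ((0 < p.1 ∧ pf π (p.1 - 1) < pf π p.1) ∨ ∃ k < p.2, p.1 < k ∧ pf π p.1 < pf π k))).card

/-- The classical Eulerian polynomial `A_n(t) = ∑_{π ∈ S_n} t^{des π}`. -/
def eulerPoly (R : Type*) [CommRing R] (n : ℕ) (t : R) : R :=
  ∑ π : Equiv.Perm (Fin n), t ^ desN π

/-- The (maj, exc) q-Eulerian polynomial `A_n(t,q)`. -/
def Aq (R : Type*) [CommRing R] (n : ℕ) (t q : R) : R :=
  ∑ π : Equiv.Perm (Fin n), t ^ excN π * q ^ (majN π - excN π)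

/-- The Gaussian binomial coefficient (as a value at `q`), via the q-Pascal recurrence. -/
def gaussR {R : Type*} [CommRing R] (q : R) : ℕ → ℕ → R
  | _, 0 => 1
  | 0, _ + 1 => 0
  | n + 1, k + 1 => gaussR q n k + q ^ (k + 1) * gaussR q n (k + 1)

/-- The q-binomial-Eulerian polynomial `Ã_n(t,q)`. -/
def Atilde (R : Type*) [CommRing R] (n : ℕ) (t q : R) : R :=
  1 + t * ∑ m ∈ Icc 1 n, gaussR q n m * Aq R m t q

/-- Membership in PRW: if the permutation has an ascent, then the first ascent
carries the smallest letter. -/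
def isPRW {n : ℕ} (π : Equiv.Perm (Fin n)) : Prop :=
  ∀ i < n, i + 1 < n → pf π i < pf π (i + 1) →
    (∀ j < i, ¬ pf π j < pf π (j + 1)) → pf π i = 0

instance {n : ℕ} : DecidablePred (isPRW (n := n)) := fun _ => by
  unfold isPRW; infer_instance

/-- 1-based entries with boundary convention `σ₀ = σ_{n+1} = +∞` (encoded as `n`). -/
def extv {n : ℕ} (π : Equiv.Perm (Fin n)) (i : ℕ) : ℕ :=
  if 1 ≤ i ∧ i ≤ n then pf π (i - 1) else n

/-- Number of non-initial double descents. -/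
def ddN {n : ℕ} (π : Equiv.Perm (Fin n)) : ℕ :=
  ((Icc 2 n).filter (fun i => extv π (i + 1) < extv π i ∧ extv π i < extv π (i - 1))).card

/-- A polynomial is palindromic with respect to `n` if `h_i = h_{n-i}` for all `i ≤ n`. -/
def Palindromic (p : Polynomial ℝ) (n : ℕ) : Prop :=
  p.natDegree ≤ n ∧ ∀ i ≤ n, p.coeff i = p.coeff (n - i)

/-- A polynomial is unimodal if its coefficients weakly increase then weakly decrease. -/
def Unimodal (p : Polynomial ℝ) : Prop :=
  ∃ c : ℕ, (∀ i < c, p.coeff i ≤ p.coeff (i + 1)) ∧ ∀ i, c ≤ i → p.coeff (i + 1) ≤ p.coeff i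


section MyAux
open Polynomial

noncomputable def ext0 (p : Polynomial ℝ) : ℤ → ℝ := fun a => if 0 ≤ a then p.coeff a.toNat else 0

lemma ext0_coe (p : Polynomial ℝ) (k : ℕ) : ext0 p k = p.coeff k := by
  simp [ext0]

lemma ext0_nonneg (p : Polynomial ℝ) (hp0 : ∀ i, 0 ≤ p.coeff i) (a : ℤ) : 0 ≤ ext0 p a := by
  unfold ext0; split <;> simp [hp0]

lemma ext0_neg (p : Polynomial ℝ) (a : ℤ) (ha : a < 0) : ext0 p a = 0 := by
  simp [ext0, not_le.2 ha]

lemma ext0_big (p : Polynomial ℝ) (m : ℕ) (hdeg : p.natDegree ≤ m) (a : ℤ) (ha : (m:ℤ) < a) :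
    ext0 p a = 0 := by
  have h0 : 0 ≤ a := by omega
  rw [ext0, if_pos h0]
  exact Polynomial.coeff_eq_zero_of_natDegree_lt (by omega)

lemma ext0_symm (p : Polynomial ℝ) (m : ℕ) (hp : Palindromic p m) (a : ℤ) :
    ext0 p a = ext0 p (m - a) := by
  rcases lt_or_ge a 0 with ha | ha
  · rw [ext0_neg p a ha, ext0_big p m hp.1 _ (by omega)]
  rcases le_or_gt a m with ham | ham
  · rw [ext0, if_pos ha, ext0, if_pos (by omega)]
    have h1 : ((m:ℤ) - a).toNat = m - a.toNat := by omega
    rw [h1]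
    exact hp.2 a.toNat (by omega)
  · rw [ext0_big p m hp.1 a ham, ext0_neg p _ (by omega)]

lemma dec_nat (p : Polynomial ℝ) (m : ℕ) (hp0 : ∀ i, 0 ≤ p.coeff i)
    (hp : Palindromic p m) (hpu : Unimodal p) :
    ∀ i : ℕ, m ≤ 2*i+1 → p.coeff (i+1) ≤ p.coeff i := by
  obtain ⟨c, hc1, hc2⟩ := hpu
  intro i hi
  rcases le_or_gt c i with hci | hci
  · exact hc2 i hci
  have hd := hp.1
  rcases le_or_gt m i with him | him
  · rw [Polynomial.coeff_eq_zero_of_natDegree_lt (by omega : p.natDegree < i + 1)]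
    exact hp0 i
  · have e1 : p.coeff (i+1) = p.coeff (m - (i+1)) := hp.2 (i+1) (by omega)
    have e2 : p.coeff i = p.coeff (m - i) := hp.2 i (by omega)
    have e3 : m - i = (m - (i+1)) + 1 := by omega
    rw [e1, e2, e3]
    exact hc1 _ (by omega)

lemma ext0_dec (p : Polynomial ℝ) (m : ℕ) (hp0 : ∀ i, 0 ≤ p.coeff i)
    (hp : Palindromic p m) (hpu : Unimodal p) (a : ℤ) (ha : (m:ℤ) ≤ 2*a+1) :
    ext0 p (a+1) ≤ ext0 p a := by
  have h0 : 0 ≤ a := by omega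
  lift a to ℕ using h0
  have : ((a:ℤ)+1) = ((a+1 : ℕ) : ℤ) := by push_cast; ring
  rw [this, ext0_coe, ext0_coe]
  exact dec_nat p m hp0 hp hpu a (by omega)

lemma key (P Q : ℤ → ℝ) (m n j : ℤ) (hm : 0 ≤ m)
    (hP0 : ∀ a, 0 ≤ P a) (hQ0 : ∀ a, 0 ≤ Q a)
    (hPneg : ∀ a < 0, P a = 0) (hQneg : ∀ a < 0, Q a = 0)
    (hPs : ∀ a, P a = P (m - a)) (hQs : ∀ a, Q a = Q (n - a))
    (hPd : ∀ a, m ≤ 2*a+1 → P (a+1) ≤ P a) (hQd : ∀ a, n ≤ 2*a+1 → Q (a+1) ≤ Q a)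
    (hj : m + n ≤ 2*j+1) :
    ∑ a ∈ Icc (0:ℤ) m, P a * Q (j+1-a) ≤ ∑ a ∈ Icc (0:ℤ) m, P a * Q (j-a) := by
  -- chain lemmas for Q
  have Qdec : ∀ (k : ℕ) (s : ℤ), n ≤ 2*s+1 → Q (s + k) ≤ Q s := by
    intro k
    induction k with
    | zero => intro s _; simp
    | succ k ih =>
      intro s hs
      have e : s + ((k:ℤ)+1) = (s + k) + 1 := by ring
      have h1 : Q ((s + k) + 1) ≤ Q (s + k) := hQd (s + k) (by omega)
      calc Q (s + ((k+1:ℕ):ℤ)) = Q ((s+k)+1) := by push_cast; ring_nf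
        _ ≤ Q (s + k) := h1
        _ ≤ Q s := ih s hs
  have Qinc1 : ∀ a : ℤ, 2*a+1 ≤ n → Q a ≤ Q (a+1) := by
    intro a ha
    have h := hQd (n - a - 1) (by omega)
    have e1 : n - a - 1 + 1 = n - a := by ring
    rw [e1] at h
    rw [hQs a, hQs (a+1)]
    have e2 : n - (a+1) = n - a - 1 := by ring
    rw [e2]
    exact h
  have Qinc : ∀ (k : ℕ) (s : ℤ), 2*s ≤ n+1 → Q (s - k) ≤ Q s := by
    intro k
    induction k with
    | zero => intro s _; simp
    | succ k ih =>
      intro s hs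
      have h1 : Q (s - k - 1) ≤ Q (s - k) := by
        have := Qinc1 (s - k - 1) (by omega)
        have e : s - k - 1 + 1 = s - k := by ring
        rwa [e] at this
      calc Q (s - ((k+1:ℕ):ℤ)) = Q (s - k - 1) := by push_cast; ring_nf
        _ ≤ Q (s - k) := h1
        _ ≤ Q s := ih s hs
  have Qclaim : ∀ s w : ℤ, s < w → n ≤ s + w → Q w ≤ Q s := by
    intro s w hsw hn
    rcases lt_or_ge (n:ℤ) w with hw | hw
    · calc Q w = Q (n - w) := hQs w
        _ = 0 := hQneg _ (by omega)
        _ ≤ Q s := hQ0 s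
    · rcases le_or_gt n (2*s+1) with h | h
      · have e : w = s + ((w - s).toNat : ℤ) := by omega
        rw [e]; exact Qdec _ s h
      · rw [hQs w]
        have e : n - w = s - ((s - (n - w)).toNat : ℤ) := by omega
        rw [e]; exact Qinc _ s (by omega)
  set F : ℤ → ℝ := fun a => (P a - P (a+1)) * Q (j - a) with hF
  -- Step A
  have h1 : ∑ a ∈ Icc (0:ℤ) m, P a * Q (j-a) = ∑ a ∈ Icc (-1:ℤ) m, P a * Q (j-a) := by
    apply Finset.sum_subset (Finset.Icc_subset_Icc_left (by omega))
    intro x hx hx'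
    simp only [mem_Icc] at hx hx'
    have : x = -1 := by omega
    rw [this, hPneg (-1) (by norm_num), zero_mul]
  have h2 : ∑ a ∈ Icc (-1:ℤ) m, P (a+1) * Q (j-a) = ∑ b ∈ Icc (0:ℤ) (m+1), P b * Q (j+1-b) := by
    apply Finset.sum_nbij' (fun a => a + 1) (fun b => b - 1)
    · intro a ha; simp only [mem_Icc] at *; omega
    · intro b hb; simp only [mem_Icc] at *; omega
    · intro a _; ring
    · intro b _; ring
    · intro a _
      have : j + 1 - (a + 1) = j - a := by ring
      rw [this]
  have h3 : ∑ b ∈ Icc (0:ℤ) (m+1), P b * Q (j+1-b) = ∑ b ∈ Icc (0:ℤ) m, P b * Q (j+1-b) := by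
    symm
    apply Finset.sum_subset (Finset.Icc_subset_Icc_right (by omega))
    intro x hx hx'
    simp only [mem_Icc] at hx hx'
    have hxm : x = m + 1 := by omega
    have : P (m+1) = 0 := by rw [hPs (m+1)]; exact hPneg _ (by omega)
    rw [hxm, this, zero_mul]
  have hA : ∑ a ∈ Icc (-1:ℤ) m, F a
      = ∑ a ∈ Icc (0:ℤ) m, P a * Q (j-a) - ∑ a ∈ Icc (0:ℤ) m, P a * Q (j+1-a) := by
    have : ∀ a : ℤ, F a = P a * Q (j-a) - P (a+1) * Q (j-a) := by
      intro a; simp only [hF]; ring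
    rw [Finset.sum_congr rfl (fun a _ => this a), Finset.sum_sub_distrib, h1, h2, h3]
  -- Step B: reflection
  have hB : ∑ a ∈ Icc (-1:ℤ) m, F (m-1-a) = ∑ a ∈ Icc (-1:ℤ) m, F a := by
    apply Finset.sum_nbij' (fun a => m - 1 - a) (fun a => m - 1 - a)
    · intro a ha; simp only [mem_Icc] at *; omega
    · intro a ha; simp only [mem_Icc] at *; omega
    · intro a _; ring
    · intro a _; ring
    · intro a _; rfl
  -- Step C: G lemma
  have hG : ∀ b : ℤ, m - 1 ≤ 2*b → 0 ≤ F (m-1-b) + F b := by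
    intro b hb
    have e1 : P (m-1-b) = P (b+1) := by
      rw [hPs (b+1)]; congr 1; ring
    have e2 : P (m-1-b+1) = P b := by
      rw [hPs b]; congr 1; ring
    have e3 : F (m-1-b) + F b = (P b - P (b+1)) * (Q (j-b) - Q (j-(m-1-b))) := by
      simp only [hF]; rw [e1, e2]; ring
    rw [e3]
    apply mul_nonneg
    · exact sub_nonneg.2 (hPd b (by omega))
    · rcases eq_or_lt_of_le hb with heq | hlt
      · have : j - (m-1-b) = j - b := by omega
        rw [this, sub_self]
      · exact sub_nonneg.2 (Qclaim (j-b) (j-(m-1-b)) (by omega) (by omega))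
  have hGall : ∀ a ∈ Icc (-1:ℤ) m, 0 ≤ F a + F (m-1-a) := by
    intro a _
    rcases le_total a (m-1-a) with h | h
    · have e : a = m - 1 - (m-1-a) := by ring
      calc (0:ℝ) ≤ F (m-1-(m-1-a)) + F (m-1-a) := hG (m-1-a) (by omega)
        _ = F a + F (m-1-a) := by rw [← e]
    · have := hG a (by omega)
      linarith
  have hsum : 0 ≤ ∑ a ∈ Icc (-1:ℤ) m, F a := by
    have h2' : 0 ≤ ∑ a ∈ Icc (-1:ℤ) m, (F a + F (m-1-a)) := Finset.sum_nonneg hGall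
    rw [Finset.sum_add_distrib, hB] at h2'
    linarith
  linarith [hA ▸ hsum]

lemma conn (p q : Polynomial ℝ) (m : ℕ) (hdp : p.natDegree ≤ m) (j : ℕ) :
    (p*q).coeff j = ∑ a ∈ Icc (0:ℤ) m, ext0 p a * ext0 q (j - a) := by
  rw [Polynomial.coeff_mul, Finset.Nat.sum_antidiagonal_eq_sum_range_succ_mk]
  have hnat : ∑ k ∈ range (j+1), p.coeff k * q.coeff (j-k)
      = ∑ a ∈ Icc (0:ℤ) (j:ℤ), ext0 p a * ext0 q ((j:ℤ) - a) := by
    refine Finset.sum_nbij' (fun k => (k:ℤ)) (fun a => a.toNat) ?_ ?_ ?_ ?_ ?_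
    · intro k hk; simp only [mem_range] at hk; simp only [mem_Icc]; omega
    · intro a ha; simp only [mem_Icc] at ha; simp only [mem_range]; omega
    · intro k _; simp
    · intro a ha
      simp only [mem_Icc] at ha
      show ((a.toNat : ℤ)) = a
      omega
    · intro k hk
      simp only [mem_range] at hk
      rw [ext0_coe]
      have e : (j:ℤ) - (k:ℤ) = ((j - k : ℕ) : ℤ) := by omega
      rw [e, ext0_coe]
  rw [hnat]
  have h1 : ∑ a ∈ Icc (0:ℤ) (j:ℤ), ext0 p a * ext0 q ((j:ℤ) - a)
      = ∑ a ∈ Icc (0:ℤ) (max (m:ℤ) j), ext0 p a * ext0 q ((j:ℤ) - a) := by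
    apply Finset.sum_subset (Finset.Icc_subset_Icc_right (le_max_right _ _))
    intro x hx hx'
    simp only [mem_Icc] at hx hx'
    rw [ext0_neg q _ (by omega), mul_zero]
  have h2 : ∑ a ∈ Icc (0:ℤ) (m:ℤ), ext0 p a * ext0 q ((j:ℤ) - a)
      = ∑ a ∈ Icc (0:ℤ) (max (m:ℤ) j), ext0 p a * ext0 q ((j:ℤ) - a) := by
    apply Finset.sum_subset (Finset.Icc_subset_Icc_right (le_max_left _ _))
    intro x hx hx'
    simp only [mem_Icc] at hx hx'
    rw [ext0_big p m hdp _ (by omega), zero_mul]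
  rw [h1, ← h2]


lemma symmC (p q : Polynomial ℝ) (m n : ℕ) (hp : Palindromic p m) (hq : Palindromic q n)
    (i : ℕ) (hi : i ≤ m + n) :
    (p*q).coeff i = (p*q).coeff (m+n-i) := by
  rw [conn p q m hp.1 i, conn p q m hp.1 (m+n-i)]
  have hcast : ((m+n-i : ℕ) : ℤ) = (m:ℤ) + n - i := by omega
  rw [hcast]
  refine Finset.sum_nbij' (fun a => (m:ℤ) - a) (fun a => (m:ℤ) - a) ?_ ?_ ?_ ?_ ?_
  · intro a ha; simp only [mem_Icc] at *; omega
  · intro a ha; simp only [mem_Icc] at *; omega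
  · intro a _; ring
  · intro a _; ring
  · intro a _
    show ext0 p a * ext0 q ((i:ℤ) - a) = ext0 p ((m:ℤ) - a) * ext0 q ((m:ℤ)+(n:ℤ)-(i:ℤ) - ((m:ℤ)-a))
    rw [← ext0_symm p m hp a]
    have e : (m:ℤ)+(n:ℤ)-(i:ℤ) - ((m:ℤ)-a) = (n:ℤ) - ((i:ℤ) - a) := by ring
    rw [e, ← ext0_symm q n hq ((i:ℤ) - a)]

lemma prodDec (p q : Polynomial ℝ) (m n : ℕ)
    (hp0 : ∀ i, 0 ≤ p.coeff i) (hq0 : ∀ i, 0 ≤ q.coeff i)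
    (hp : Palindromic p m) (hq : Palindromic q n)
    (hpu : Unimodal p) (hqu : Unimodal q) :
    ∀ i : ℕ, m + n ≤ 2*i+1 → (p*q).coeff (i+1) ≤ (p*q).coeff i := by
  intro i hi
  rw [conn p q m hp.1 i, conn p q m hp.1 (i+1)]
  have hcast : ((i+1 : ℕ) : ℤ) = (i:ℤ) + 1 := by push_cast; ring
  rw [hcast]
  exact key (ext0 p) (ext0 q) m n i (by positivity)
    (ext0_nonneg p hp0) (ext0_nonneg q hq0)
    (ext0_neg p) (ext0_neg q)
    (ext0_symm p m hp) (ext0_symm q n hq)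
    (ext0_dec p m hp0 hp hpu) (ext0_dec q n hq0 hq hqu)
    (by omega)

end MyAux

/-- the product of two palindromic and unimodal polynomials with
nonnegative real coefficients is again palindromic and unimodal. -/
theorem stmt15 (p q : Polynomial ℝ) (m n : ℕ)
    (hp0 : ∀ i, 0 ≤ p.coeff i) (hq0 : ∀ i, 0 ≤ q.coeff i)
    (hp : Palindromic p m) (hq : Palindromic q n)
    (hpu : Unimodal p) (hqu : Unimodal q) :
    Palindromic (p * q) (m + n) ∧ Unimodal (p * q) := by
  constructor
  · refine ⟨Polynomial.natDegree_mul_le.trans (add_le_add hp.1 hq.1), ?_⟩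
    intro i hi
    exact symmC p q m n hp hq i hi
  · refine ⟨(m+n+1)/2, ?_, ?_⟩
    · intro i hilt
      have h1 : 2*i+1 ≤ m+n := by omega
      have e1 : (p*q).coeff i = (p*q).coeff (m+n-i) := symmC p q m n hp hq i (by omega)
      have e2 : (p*q).coeff (i+1) = (p*q).coeff (m+n-(i+1)) := symmC p q m n hp hq (i+1) (by omega)
      have e3 : m+n-i = (m+n-(i+1)) + 1 := by omega
      rw [e1, e2, e3]
      exact prodDec p q m n hp0 hq0 hp hq hpu hqu (m+n-(i+1)) (by omega)
    · intro i hige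
      exact prodDec p q m n hp0 hq0 hp hq hpu hqu i (by omega)
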